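/- For the RCA with initial state (α, β, γ), the first moment at time 3 equals m(3) = (1/2)(3 cos²(2θ) + 2 cos(2θ) + 1)(|γ|² − |β|²) − (1/2) sin θ · sin(2θ) · (α·conj(β+γ) + conj(α)·(β+γ)). -/

import Mathlib

theorem stmt7 (θ : ℝ) (α β γ : ℂ) (X : ℤ × ℕ → ℂ)
    (hrec : ∀ (k : ℤ) (n : ℕ),
      X (k, n + 2) = (Real.cos θ : ℂ) * (X (k + 1, n + 1) - X (k - 1, n + 1)) + X (k, n))
    (h00 : X (0, 0) = α) (hm1 : X (-1, 1) = β) (hp1 : X (1, 1) = γ)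
    (h0 : ∀ k : ℤ, k ≠ 0 → X (k, 0) = 0)
    (h1 : ∀ k : ℤ, k ≠ -1 → k ≠ 1 → X (k, 1) = 0) :
    ((∑' k : ℤ, (k : ℝ) * ‖X (k, 3)‖ ^ 2 : ℝ) : ℂ) =
      (1 / 2) * ((3 * Real.cos (2 * θ) ^ 2 + 2 * Real.cos (2 * θ) + 1 : ℝ) : ℂ) *
        ((‖γ‖ ^ 2 - ‖β‖ ^ 2 : ℝ) : ℂ) -
      (1 / 2) * ((Real.sin θ * Real.sin (2 * θ) : ℝ) : ℂ) *
        (α * (starRingEnd ℂ) (β + γ) + (starRingEnd ℂ) α * (β + γ)) := by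
  set c : ℝ := Real.cos θ with hc
  -- time 2 values
  have h2 : ∀ k : ℤ, X (k, 2) = (c : ℂ) * (X (k + 1, 1) - X (k - 1, 1)) + X (k, 0) :=
    fun k => hrec k 0
  have h3 : ∀ k : ℤ, X (k, 3) = (c : ℂ) * (X (k + 1, 2) - X (k - 1, 2)) + X (k, 1) :=
    fun k => hrec k 1
  have h2z : ∀ k : ℤ, k ≠ -2 → k ≠ 0 → k ≠ 2 → X (k, 2) = 0 := by
    intro k hk1 hk2 hk3
    rw [h2 k, h1 _ (by omega) (by omega), h1 _ (by omega) (by omega), h0 _ (by omega)]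
    ring
  have h2m2 : X (-2, 2) = (c : ℂ) * β := by
    rw [h2 (-2), show (-2 : ℤ) + 1 = -1 by decide, show (-2 : ℤ) - 1 = -3 by decide,
      hm1, h1 (-3) (by decide) (by decide), h0 (-2) (by decide)]
    ring
  have h20 : X (0, 2) = (c : ℂ) * (γ - β) + α := by
    rw [h2 0, show (0 : ℤ) + 1 = 1 by decide, show (0 : ℤ) - 1 = -1 by decide, hm1, hp1, h00]
  have h22 : X (2, 2) = -((c : ℂ) * γ) := by
    rw [h2 2, show (2 : ℤ) + 1 = 3 by decide, show (2 : ℤ) - 1 = 1 by decide,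
      hp1, h1 3 (by decide) (by decide), h0 2 (by decide)]
    ring
  have h3z : ∀ k : ℤ, k ≠ -3 → k ≠ -1 → k ≠ 1 → k ≠ 3 → X (k, 3) = 0 := by
    intro k hk1 hk2 hk3 hk4
    rw [h3 k, h2z _ (by omega) (by omega) (by omega),
      h2z _ (by omega) (by omega) (by omega), h1 _ (by omega) (by omega)]
    ring
  have h3m3 : X (-3, 3) = (c : ℂ) ^ 2 * β := by
    rw [h3 (-3), show (-3 : ℤ) + 1 = -2 by decide, show (-3 : ℤ) - 1 = -4 by decide,
      h2m2, h2z (-4) (by decide) (by decide) (by decide), h1 (-3) (by decide) (by decide)]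
    ring
  have h3m1 : X (-1, 3) = (c : ℂ) ^ 2 * γ - 2 * (c : ℂ) ^ 2 * β + (c : ℂ) * α + β := by
    rw [h3 (-1), show (-1 : ℤ) + 1 = 0 by decide, show (-1 : ℤ) - 1 = -2 by decide,
      h20, h2m2, hm1]
    ring
  have h3p1 : X (1, 3) = -(2 * (c : ℂ) ^ 2 * γ) + (c : ℂ) ^ 2 * β - (c : ℂ) * α + γ := by
    rw [h3 1, show (1 : ℤ) + 1 = 2 by decide, show (1 : ℤ) - 1 = 0 by decide, h22, h20, hp1]
    ring
  have h3p3 : X (3, 3) = (c : ℂ) ^ 2 * γ := by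
    rw [h3 3, show (3 : ℤ) + 1 = 4 by decide, show (3 : ℤ) - 1 = 2 by decide,
      h22, h2z 4 (by decide) (by decide) (by decide), h1 3 (by decide) (by decide)]
    ring
  have hsum : (∑' k : ℤ, (k : ℝ) * ‖X (k, 3)‖ ^ 2) =
      ∑ k ∈ ({-3, -1, 1, 3} : Finset ℤ), (k : ℝ) * ‖X (k, 3)‖ ^ 2 := by
    apply tsum_eq_sum
    intro k hk
    simp only [Finset.mem_insert, Finset.mem_singleton] at hk
    push_neg at hk
    rw [h3z k hk.1 hk.2.1 hk.2.2.1 hk.2.2.2]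
    simp
  rw [hsum]
  have ecos : Real.cos (2 * θ) = 2 * c ^ 2 - 1 := by
    rw [Real.cos_two_mul]
  have esin : Real.sin θ * Real.sin (2 * θ) = 2 * (1 - c ^ 2) * c := by
    rw [Real.sin_two_mul]
    have hs : Real.sin θ ^ 2 = 1 - c ^ 2 := by
      have := Real.sin_sq_add_cos_sq θ; rw [hc]; linarith
    linear_combination 2 * c * hs
  rw [ecos, esin]
  have key : ∀ z : ℂ, ((‖z‖ ^ 2 : ℝ) : ℂ) = z * (starRingEnd ℂ) z := by
    intro z
    rw [Complex.mul_conj]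
    congr 1
    rw [Complex.sq_norm]
  have expand : ∑ k ∈ ({-3, -1, 1, 3} : Finset ℤ), (k : ℝ) * ‖X (k, 3)‖ ^ 2 =
      (-3) * ‖X (-3, 3)‖ ^ 2 + (-1) * ‖X (-1, 3)‖ ^ 2 + 1 * ‖X (1, 3)‖ ^ 2
        + 3 * ‖X (3, 3)‖ ^ 2 := by
    norm_num [Finset.sum_insert, Finset.mem_insert]
    ring
  rw [expand]
  push_cast [key]
  rw [h3m3, h3m1, h3p1, h3p3]
  simp only [map_mul, map_add, map_sub, map_neg, map_pow, map_ofNat, Complex.conj_ofReal,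
    Complex.conj_ofNat]
  ring
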